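/- Let n ≥ 1 and let g_1,…,g_n be real constants; set y_{n+1} := y_1 and x_{n+1} := x_1 (cyclic indexing). Define Q : ℝ^n × ℝ^n → ℝ by Q(x,y) = exp( Σ_{i=1}^{n} ( e^{x_i − y_i} + g_i e^{y_{i+1} − x_i} ) ). Then for all x, y ∈ ℝ^n one has −(1/2) Σ_{i=1}^{n} ∂²Q/∂x_i²(x,y) + ( Σ_{i=1}^{n} g_i e^{x_{i+1} − x_i} ) Q(x,y) = −(1/2) Σ_{i=1}^{n} ∂²Q/∂y_i²(x,y) + ( Σ_{i=1}^{n} g_i e^{y_{i+1} − y_i} ) Q(x,y). That is, the kernel of the Baxter Q-operator at zero spectral parameter intertwines the quadratic Hamiltonian of the affine (closed) gl_n Toda chain with itself. -/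

import Mathlib

open Real

/-- Second partial derivative of `f` in the `i`-th coordinate at `x`. -/
noncomputable def pd2 {k : ℕ} (f : (Fin k → ℝ) → ℝ) (i : Fin k) (x : Fin k → ℝ) : ℝ :=
  deriv (deriv (fun t : ℝ => f (Function.update x i t))) (x i)

/-- Kernel of the Baxter Q-operator at zero spectral parameter for the closed
(affine) `gl_n` Toda chain, `n = m + 1 ≥ 1`; indices are cyclic (`Fin` addition):
`Q(x,y) = exp( Σ_{i=1}^{n} ( e^{x_i − y_i} + g_i e^{y_{i+1} − x_i} ) )`. -/
noncomputable def Qker (m : ℕ) (g x y : Fin (m + 1) → ℝ) : ℝ :=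
  Real.exp (∑ i : Fin (m + 1),
    (Real.exp (x i - y i) + g i * Real.exp (y (i + 1) - x i)))

lemma exp_sub_hasDerivAt (a t : ℝ) :
    HasDerivAt (fun t : ℝ => Real.exp (t - a)) (Real.exp (t - a)) t := by
  simpa using ((hasDerivAt_id t).sub_const a).exp

lemma exp_sub_hasDerivAt' (g a t : ℝ) :
    HasDerivAt (fun t : ℝ => g * Real.exp (a - t)) (-(g * Real.exp (a - t))) t := by
  simpa using (((hasDerivAt_const t a).sub (hasDerivAt_id t)).exp).const_mul g

lemma pd2_x (m : ℕ) (g x y : Fin (m + 1) → ℝ) (i : Fin (m + 1)) :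
    pd2 (fun u => Qker m g u y) i x
      = ((Real.exp (x i - y i) + g i * Real.exp (y (i + 1) - x i))
         + (Real.exp (x i - y i) - g i * Real.exp (y (i + 1) - x i)) ^ 2)
        * Qker m g x y := by
  have hS : ∀ t : ℝ, HasDerivAt
      (fun t : ℝ => ∑ j : Fin (m + 1),
        (Real.exp (Function.update x i t j - y j)
          + g j * Real.exp (y (j + 1) - Function.update x i t j)))
      (Real.exp (t - y i) - g i * Real.exp (y (i + 1) - t)) t := by
    intro t
    have h1 : HasDerivAt
        (fun t : ℝ => ∑ j : Fin (m + 1),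
          (Real.exp (Function.update x i t j - y j)
            + g j * Real.exp (y (j + 1) - Function.update x i t j)))
        (∑ j : Fin (m + 1),
          if j = i then Real.exp (t - y i) - g i * Real.exp (y (i + 1) - t) else 0) t := by
      apply HasDerivAt.fun_sum
      intro j _
      by_cases h : j = i
      · subst h
        simp only [Function.update_self, if_pos rfl]
        have := (exp_sub_hasDerivAt (y j) t).fun_add (exp_sub_hasDerivAt' (g j) (y (j + 1)) t)
        simpa [sub_eq_add_neg] using this
      · simp only [Function.update_of_ne h, if_neg h]
        exact hasDerivAt_const t _
    simpa using h1
  have hD1 : deriv (fun t : ℝ => (fun u => Qker m g u y) (Function.update x i t))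
      = fun t : ℝ => (Real.exp (t - y i) - g i * Real.exp (y (i + 1) - t))
          * (fun u => Qker m g u y) (Function.update x i t) := by
    funext t
    have : HasDerivAt (fun t : ℝ => (fun u => Qker m g u y) (Function.update x i t))
        ((Real.exp (t - y i) - g i * Real.exp (y (i + 1) - t))
          * (fun u => Qker m g u y) (Function.update x i t)) t := by
      have := (hS t).exp
      simpa [Qker, mul_comm] using this
    exact this.deriv
  have hD2 : HasDerivAt (fun t : ℝ => (Real.exp (t - y i) - g i * Real.exp (y (i + 1) - t))
          * (fun u => Qker m g u y) (Function.update x i t))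
      (((Real.exp (x i - y i) + g i * Real.exp (y (i + 1) - x i))
         + (Real.exp (x i - y i) - g i * Real.exp (y (i + 1) - x i)) ^ 2)
        * Qker m g x y) (x i) := by
    have hc : HasDerivAt (fun t : ℝ => Real.exp (t - y i) - g i * Real.exp (y (i + 1) - t))
        (Real.exp (x i - y i) + g i * Real.exp (y (i + 1) - x i)) (x i) := by
      have := (exp_sub_hasDerivAt (y i) (x i)).fun_sub (exp_sub_hasDerivAt' (g i) (y (i + 1)) (x i))
      simpa [sub_neg_eq_add] using this
    have hq : HasDerivAt (fun t : ℝ => (fun u => Qker m g u y) (Function.update x i t))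
        ((Real.exp (x i - y i) - g i * Real.exp (y (i + 1) - x i)) * Qker m g x y) (x i) := by
      have := (hS (x i)).exp
      simpa [Qker, Function.update_eq_self, mul_comm] using this
    have h2 := hc.fun_mul hq
    simp only [Function.update_eq_self] at h2
    exact h2.congr_deriv (by ring)
  rw [pd2, hD1]
  exact hD2.deriv

lemma pd2_y (m : ℕ) (g x y : Fin (m + 1) → ℝ) (i : Fin (m + 1)) :
    pd2 (fun v => Qker m g x v) i y
      = ((Real.exp (x i - y i) + g (i - 1) * Real.exp (y i - x (i - 1)))
         + (g (i - 1) * Real.exp (y i - x (i - 1)) - Real.exp (x i - y i)) ^ 2)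
        * Qker m g x y := by
  have hS : ∀ t : ℝ, HasDerivAt
      (fun t : ℝ => ∑ j : Fin (m + 1),
        (Real.exp (x j - Function.update y i t j)
          + g j * Real.exp (Function.update y i t (j + 1) - x j)))
      (g (i - 1) * Real.exp (t - x (i - 1)) - Real.exp (x i - t)) t := by
    intro t
    have h1 : HasDerivAt
        (fun t : ℝ => ∑ j : Fin (m + 1),
          (Real.exp (x j - Function.update y i t j)
            + g j * Real.exp (Function.update y i t (j + 1) - x j)))
        (∑ j : Fin (m + 1),
          ((if j = i then -Real.exp (x i - t) else 0)
            + (if j + 1 = i then g j * Real.exp (t - x j) else 0))) t := by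
      apply HasDerivAt.fun_sum
      intro j _
      apply HasDerivAt.add
      · by_cases h : j = i
        · subst h
          simp only [Function.update_self, if_pos rfl]
          simpa using exp_sub_hasDerivAt' 1 (x j) t
        · simp only [Function.update_of_ne h, if_neg h]
          exact hasDerivAt_const t _
      · by_cases h : j + 1 = i
        · subst h
          simp only [Function.update_self, if_pos rfl]
          exact (exp_sub_hasDerivAt (x j) t).const_mul (g j)
        · simp only [Function.update_of_ne h, if_neg h]
          exact hasDerivAt_const t _
    have e1 : (∑ j : Fin (m + 1),
          ((if j = i then -Real.exp (x i - t) else 0)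
            + (if j + 1 = i then g j * Real.exp (t - x j) else 0)))
        = g (i - 1) * Real.exp (t - x (i - 1)) - Real.exp (x i - t) := by
      rw [Finset.sum_add_distrib]
      have e2 : (∑ j : Fin (m + 1), if j = i then -Real.exp (x i - t) else 0)
          = -Real.exp (x i - t) := by
        simp
      have e3 : (∑ j : Fin (m + 1), if j + 1 = i then g j * Real.exp (t - x j) else 0)
          = g (i - 1) * Real.exp (t - x (i - 1)) := by
        rw [Finset.sum_eq_single (i - 1)]
        · simp [sub_add_cancel]
        · intro j _ hj
          have : j + 1 ≠ i := fun h => hj (by rw [← h]; simp)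
          simp [this]
        · simp
      rw [e2, e3]; ring
    rw [← e1]
    exact h1
  have hD1 : deriv (fun t : ℝ => (fun v => Qker m g x v) (Function.update y i t))
      = fun t : ℝ => (g (i - 1) * Real.exp (t - x (i - 1)) - Real.exp (x i - t))
          * (fun v => Qker m g x v) (Function.update y i t) := by
    funext t
    have : HasDerivAt (fun t : ℝ => (fun v => Qker m g x v) (Function.update y i t))
        ((g (i - 1) * Real.exp (t - x (i - 1)) - Real.exp (x i - t))
          * (fun v => Qker m g x v) (Function.update y i t)) t := by
      have := (hS t).exp
      simpa [Qker, mul_comm] using this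
    exact this.deriv
  have hD2 : HasDerivAt (fun t : ℝ => (g (i - 1) * Real.exp (t - x (i - 1)) - Real.exp (x i - t))
          * (fun v => Qker m g x v) (Function.update y i t))
      (((Real.exp (x i - y i) + g (i - 1) * Real.exp (y i - x (i - 1)))
         + (g (i - 1) * Real.exp (y i - x (i - 1)) - Real.exp (x i - y i)) ^ 2)
        * Qker m g x y) (y i) := by
    have hc : HasDerivAt (fun t : ℝ => g (i - 1) * Real.exp (t - x (i - 1)) - Real.exp (x i - t))
        (g (i - 1) * Real.exp (y i - x (i - 1)) + Real.exp (x i - y i)) (y i) := by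
      have := ((exp_sub_hasDerivAt (x (i - 1)) (y i)).const_mul (g (i - 1))).fun_sub
        (exp_sub_hasDerivAt' 1 (x i) (y i))
      simpa [sub_neg_eq_add] using this
    have hq : HasDerivAt (fun t : ℝ => (fun v => Qker m g x v) (Function.update y i t))
        ((g (i - 1) * Real.exp (y i - x (i - 1)) - Real.exp (x i - y i)) * Qker m g x y) (y i) := by
      have := (hS (y i)).exp
      simpa [Qker, Function.update_eq_self, mul_comm] using this
    have h2 := hc.fun_mul hq
    simp only [Function.update_eq_self] at h2
    exact h2.congr_deriv (by ring)
  rw [pd2, hD1]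
  exact hD2.deriv

/-- The Baxter kernel intertwines the quadratic Hamiltonian of the closed
(affine) `gl_n` Toda chain with itself, `n = m + 1 ≥ 1`. -/
theorem affine_gl_baxter_intertwining (m : ℕ) (g : Fin (m + 1) → ℝ)
    (x y : Fin (m + 1) → ℝ) :
    -(1/2) * (∑ i : Fin (m + 1), pd2 (fun u => Qker m g u y) i x)
      + (∑ i : Fin (m + 1), g i * Real.exp (x (i + 1) - x i)) * Qker m g x y
    = -(1/2) * (∑ i : Fin (m + 1), pd2 (fun v => Qker m g x v) i y)
      + (∑ i : Fin (m + 1), g i * Real.exp (y (i + 1) - y i)) * Qker m g x y := by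
  set A : Fin (m + 1) → ℝ := fun i => Real.exp (x i - y i) with hA
  set B : Fin (m + 1) → ℝ := fun i => g i * Real.exp (y (i + 1) - x i) with hB
  set C : Fin (m + 1) → ℝ := fun i => g (i - 1) * Real.exp (y i - x (i - 1)) with hC
  have hCB : ∀ i : Fin (m + 1), C (i + 1) = B i := by
    intro i; simp [hC, hB, add_sub_cancel_right]
  have hsumBC : ∑ i : Fin (m + 1), C i = ∑ i : Fin (m + 1), B i := by
    rw [← Equiv.sum_comp (Equiv.addRight (1 : Fin (m + 1))) C]
    exact Finset.sum_congr rfl (fun i _ => hCB i)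
  have hsumBC2 : ∑ i : Fin (m + 1), (C i) ^ 2 = ∑ i : Fin (m + 1), (B i) ^ 2 := by
    rw [← Equiv.sum_comp (Equiv.addRight (1 : Fin (m + 1))) (fun i => (C i) ^ 2)]
    exact Finset.sum_congr rfl (fun i _ => by show C (i + 1) ^ 2 = B i ^ 2; rw [hCB i])
  have hAB : ∀ i : Fin (m + 1), A i * B i = g i * Real.exp (y (i + 1) - y i) := by
    intro i
    simp only [hA, hB]
    rw [mul_comm (g i) _, ← mul_assoc, ← Real.exp_add, mul_comm]
    ring_nf
  have hAC : ∀ i : Fin (m + 1), A i * C i = g (i - 1) * Real.exp (x i - x (i - 1)) := by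
    intro i
    simp only [hA, hC]
    rw [mul_comm (g (i - 1)) _, ← mul_assoc, ← Real.exp_add, mul_comm]
    ring_nf
  have hsumAC : ∑ i : Fin (m + 1), A i * C i
      = ∑ i : Fin (m + 1), g i * Real.exp (x (i + 1) - x i) := by
    rw [Finset.sum_congr rfl (fun i _ => hAC i),
      ← Equiv.sum_comp (Equiv.addRight (1 : Fin (m + 1)))
        (fun i => g (i - 1) * Real.exp (x i - x (i - 1)))]
    exact Finset.sum_congr rfl (fun i _ => by simp [add_sub_cancel_right])
  have hsumAB : ∑ i : Fin (m + 1), A i * B i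
      = ∑ i : Fin (m + 1), g i * Real.exp (y (i + 1) - y i) :=
    Finset.sum_congr rfl (fun i _ => hAB i)
  have hx : ∑ i : Fin (m + 1), pd2 (fun u => Qker m g u y) i x
      = (∑ i : Fin (m + 1), ((A i + B i) + (A i - B i) ^ 2)) * Qker m g x y := by
    rw [Finset.sum_mul]
    exact Finset.sum_congr rfl (fun i _ => pd2_x m g x y i)
  have hy : ∑ i : Fin (m + 1), pd2 (fun v => Qker m g x v) i y
      = (∑ i : Fin (m + 1), ((A i + C i) + (C i - A i) ^ 2)) * Qker m g x y := by
    rw [Finset.sum_mul]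
    exact Finset.sum_congr rfl (fun i _ => pd2_y m g x y i)
  rw [hx, hy]
  have ex : ∑ i : Fin (m + 1), ((A i + B i) + (A i - B i) ^ 2)
      = ∑ i : Fin (m + 1), A i + ∑ i : Fin (m + 1), B i + ∑ i : Fin (m + 1), (A i) ^ 2
        + ∑ i : Fin (m + 1), (B i) ^ 2 - 2 * ∑ i : Fin (m + 1), A i * B i := by
    simp only [← Finset.sum_add_distrib, ← Finset.sum_sub_distrib, Finset.mul_sum]
    exact Finset.sum_congr rfl (fun i _ => by ring)
  have ey : ∑ i : Fin (m + 1), ((A i + C i) + (C i - A i) ^ 2)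
      = ∑ i : Fin (m + 1), A i + ∑ i : Fin (m + 1), C i + ∑ i : Fin (m + 1), (A i) ^ 2
        + ∑ i : Fin (m + 1), (C i) ^ 2 - 2 * ∑ i : Fin (m + 1), A i * C i := by
    simp only [← Finset.sum_add_distrib, ← Finset.sum_sub_distrib, Finset.mul_sum]
    exact Finset.sum_congr rfl (fun i _ => by ring)
  rw [ex, ey, hsumBC, hsumBC2, ← hsumAC, ← hsumAB]
  ring
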